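/- arXiv:2504.03996 — 2 statements merged into one kernel-verified Lean document; each statement's English description precedes it below -/
import Mathlib

section
/- A twice continuously differentiable function f : ℝⁿ → ℝ satisfies f(x) + f(y) ≥ f(x ∨ y) + f(x ∧ y) for all x, y (submodularity) if and only if all mixed second partial derivatives ∂²f/∂xᵢ∂xⱼ with i ≠ j are nonpositive everywhere. -/
open Set

private lemma key_le {n : ℕ} (f : (Fin n → ℝ) → ℝ) (hf : ContDiff ℝ 2 f)
    (a u v : Fin n → ℝ) (c : ℝ)
    (h : ∀ σ ∈ Set.Icc (0:ℝ) 1, ∀ τ ∈ Set.Icc (0:ℝ) 1,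
      fderiv ℝ (fderiv ℝ f) (a + σ • u + τ • v) u v ≤ c) :
    f (a + u + v) + f a - f (a + u) - f (a + v) ≤ c := by
  have hd1 : Differentiable ℝ f := hf.differentiable two_ne_zero
  have hf1 : ContDiff ℝ 1 (fderiv ℝ f) := hf.fderiv_right (by norm_num)
  have hd2 : Differentiable ℝ (fderiv ℝ f) := hf1.differentiable one_ne_zero
  have hpath : ∀ (b w : Fin n → ℝ) (σ : ℝ), HasDerivAt (fun s : ℝ => b + s • w) w σ := by
    intro b w σ
    simpa using ((hasDerivAt_id σ).smul_const w).const_add b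
  have step1 : ∀ t ∈ Set.Icc (0:ℝ) 1,
      fderiv ℝ f (a + u + t • v) v - fderiv ℝ f (a + t • v) v ≤ c := by
    intro t ht
    set φ : ℝ → ℝ := fun σ => fderiv ℝ f (a + σ • u + t • v) v - σ * c with hφ
    have hder : ∀ σ : ℝ, HasDerivAt φ
        (fderiv ℝ (fderiv ℝ f) (a + σ • u + t • v) u v - c) σ := by
      intro σ
      have h1 : HasDerivAt (fun s : ℝ => a + s • u + t • v) u σ :=
        (hpath a u σ).add_const (t • v)
      have h2 : HasDerivAt (fun s : ℝ => fderiv ℝ f (a + s • u + t • v))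
          (fderiv ℝ (fderiv ℝ f) (a + σ • u + t • v) u) σ :=
        (hd2 _).hasFDerivAt.comp_hasDerivAt σ h1
      have h3 := h2.clm_apply (hasDerivAt_const σ v)
      simp only [map_zero, add_zero] at h3
      exact h3.sub (hasDerivAt_mul_const c)
    have anti : AntitoneOn φ (Set.Icc 0 1) :=
      antitoneOn_of_deriv_nonpos (convex_Icc 0 1)
        (fun x _ => (hder x).continuousAt.continuousWithinAt)
        (fun x _ => (hder x).differentiableAt.differentiableWithinAt)
        (fun x hx => by
          rw [(hder x).deriv]
          have hx' : x ∈ Set.Icc (0:ℝ) 1 := by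
            rw [interior_Icc] at hx; exact Set.mem_Icc_of_Ioo hx
          have := h x hx' t ht
          linarith)
    have h01 := anti (Set.left_mem_Icc.mpr zero_le_one) (Set.right_mem_Icc.mpr zero_le_one)
      zero_le_one
    simp only [hφ, one_smul, zero_smul, add_zero, one_mul, zero_mul, sub_zero] at h01
    linarith
  set g : ℝ → ℝ := fun t => f (a + u + t • v) - f (a + t • v) - t * c with hg
  have hder : ∀ t : ℝ, HasDerivAt g
      (fderiv ℝ f (a + u + t • v) v - fderiv ℝ f (a + t • v) v - c) t := by
    intro t
    have h1 : HasDerivAt (fun s : ℝ => f (a + u + s • v)) (fderiv ℝ f (a + u + t • v) v) t :=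
      (hd1 _).hasFDerivAt.comp_hasDerivAt t (hpath (a + u) v t)
    have h2 : HasDerivAt (fun s : ℝ => f (a + s • v)) (fderiv ℝ f (a + t • v) v) t :=
      (hd1 _).hasFDerivAt.comp_hasDerivAt t (hpath a v t)
    exact (h1.sub h2).sub (hasDerivAt_mul_const c)
  have anti : AntitoneOn g (Set.Icc 0 1) :=
    antitoneOn_of_deriv_nonpos (convex_Icc 0 1)
      (fun x _ => (hder x).continuousAt.continuousWithinAt)
      (fun x _ => (hder x).differentiableAt.differentiableWithinAt)
      (fun x hx => by
        rw [(hder x).deriv]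
        have hx' : x ∈ Set.Icc (0:ℝ) 1 := by
          rw [interior_Icc] at hx; exact Set.mem_Icc_of_Ioo hx
        have := step1 x hx'
        linarith)
  have h01 := anti (Set.left_mem_Icc.mpr zero_le_one) (Set.right_mem_Icc.mpr zero_le_one)
    zero_le_one
  simp only [hg, one_smul, zero_smul, add_zero, one_mul, zero_mul, sub_zero] at h01
  linarith

private lemma key_ge {n : ℕ} (f : (Fin n → ℝ) → ℝ) (hf : ContDiff ℝ 2 f)
    (a u v : Fin n → ℝ) (c : ℝ)
    (h : ∀ σ ∈ Set.Icc (0:ℝ) 1, ∀ τ ∈ Set.Icc (0:ℝ) 1,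
      c ≤ fderiv ℝ (fderiv ℝ f) (a + σ • u + τ • v) u v) :
    c ≤ f (a + u + v) + f a - f (a + u) - f (a + v) := by
  have hd1 : Differentiable ℝ f := hf.differentiable two_ne_zero
  have hf1 : ContDiff ℝ 1 (fderiv ℝ f) := hf.fderiv_right (by norm_num)
  have hd2 : Differentiable ℝ (fderiv ℝ f) := hf1.differentiable one_ne_zero
  have hpath : ∀ (b w : Fin n → ℝ) (σ : ℝ), HasDerivAt (fun s : ℝ => b + s • w) w σ := by
    intro b w σ
    simpa using ((hasDerivAt_id σ).smul_const w).const_add b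
  have step1 : ∀ t ∈ Set.Icc (0:ℝ) 1,
      c ≤ fderiv ℝ f (a + u + t • v) v - fderiv ℝ f (a + t • v) v := by
    intro t ht
    set φ : ℝ → ℝ := fun σ => fderiv ℝ f (a + σ • u + t • v) v - σ * c with hφ
    have hder : ∀ σ : ℝ, HasDerivAt φ
        (fderiv ℝ (fderiv ℝ f) (a + σ • u + t • v) u v - c) σ := by
      intro σ
      have h1 : HasDerivAt (fun s : ℝ => a + s • u + t • v) u σ :=
        (hpath a u σ).add_const (t • v)
      have h2 : HasDerivAt (fun s : ℝ => fderiv ℝ f (a + s • u + t • v))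
          (fderiv ℝ (fderiv ℝ f) (a + σ • u + t • v) u) σ :=
        (hd2 _).hasFDerivAt.comp_hasDerivAt σ h1
      have h3 := h2.clm_apply (hasDerivAt_const σ v)
      simp only [map_zero, add_zero] at h3
      exact h3.sub (hasDerivAt_mul_const c)
    have mono : MonotoneOn φ (Set.Icc 0 1) :=
      monotoneOn_of_deriv_nonneg (convex_Icc 0 1)
        (fun x _ => (hder x).continuousAt.continuousWithinAt)
        (fun x _ => (hder x).differentiableAt.differentiableWithinAt)
        (fun x hx => by
          rw [(hder x).deriv]
          have hx' : x ∈ Set.Icc (0:ℝ) 1 := by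
            rw [interior_Icc] at hx; exact Set.mem_Icc_of_Ioo hx
          have := h x hx' t ht
          linarith)
    have h01 := mono (Set.left_mem_Icc.mpr zero_le_one) (Set.right_mem_Icc.mpr zero_le_one)
      zero_le_one
    simp only [hφ, one_smul, zero_smul, add_zero, one_mul, zero_mul, sub_zero] at h01
    linarith
  set g : ℝ → ℝ := fun t => f (a + u + t • v) - f (a + t • v) - t * c with hg
  have hder : ∀ t : ℝ, HasDerivAt g
      (fderiv ℝ f (a + u + t • v) v - fderiv ℝ f (a + t • v) v - c) t := by
    intro t
    have h1 : HasDerivAt (fun s : ℝ => f (a + u + s • v)) (fderiv ℝ f (a + u + t • v) v) t :=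
      (hd1 _).hasFDerivAt.comp_hasDerivAt t (hpath (a + u) v t)
    have h2 : HasDerivAt (fun s : ℝ => f (a + s • v)) (fderiv ℝ f (a + t • v) v) t :=
      (hd1 _).hasFDerivAt.comp_hasDerivAt t (hpath a v t)
    exact (h1.sub h2).sub (hasDerivAt_mul_const c)
  have mono : MonotoneOn g (Set.Icc 0 1) :=
    monotoneOn_of_deriv_nonneg (convex_Icc 0 1)
      (fun x _ => (hder x).continuousAt.continuousWithinAt)
      (fun x _ => (hder x).differentiableAt.differentiableWithinAt)
      (fun x hx => by
        rw [(hder x).deriv]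
        have hx' : x ∈ Set.Icc (0:ℝ) 1 := by
          rw [interior_Icc] at hx; exact Set.mem_Icc_of_Ioo hx
        have := step1 x hx'
        linarith)
  have h01 := mono (Set.left_mem_Icc.mpr zero_le_one) (Set.right_mem_Icc.mpr zero_le_one)
    zero_le_one
  simp only [hg, one_smul, zero_smul, add_zero, one_mul, zero_mul, sub_zero] at h01
  linarith

private lemma expand_bilinear {n : ℕ} (B : (Fin n → ℝ) →L[ℝ] (Fin n → ℝ) →L[ℝ] ℝ)
    (u v : Fin n → ℝ) :
    B u v = ∑ i, ∑ j, u i * v j * B (Pi.single i 1) (Pi.single j 1) := by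
  have hu : u = ∑ i, u i • (Pi.single i 1 : Fin n → ℝ) := by
    ext k
    simp [Pi.single_apply, Finset.sum_apply, mul_ite]
  have hv : v = ∑ j, v j • (Pi.single j 1 : Fin n → ℝ) := by
    ext k
    simp [Pi.single_apply, Finset.sum_apply, mul_ite]
  conv_lhs => rw [hu, hv]
  simp only [map_sum, map_smul, ContinuousLinearMap.sum_apply, ContinuousLinearMap.smul_apply,
    smul_eq_mul, Finset.mul_sum]
  rw [Finset.sum_comm]
  exact Finset.sum_congr rfl fun i _ => Finset.sum_congr rfl fun j _ => by ring

/-- A C² function f : ℝⁿ → ℝ is submodular (f x + f y ≥ f (x ⊔ y) + f (x ⊓ y))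
iff all mixed second partials ∂²f/∂xᵢ∂xⱼ, i ≠ j, are nonpositive everywhere. -/
theorem stmt1 (n : ℕ) (f : (Fin n → ℝ) → ℝ) (hf : ContDiff ℝ 2 f) :
    (∀ x y : Fin n → ℝ, f (x ⊔ y) + f (x ⊓ y) ≤ f x + f y) ↔
      (∀ x : Fin n → ℝ, ∀ i j : Fin n, i ≠ j →
        iteratedFDeriv ℝ 2 f x ![Pi.single i 1, Pi.single j 1] ≤ 0) := by
  have hf1 : ContDiff ℝ 1 (fderiv ℝ f) := hf.fderiv_right (by norm_num)
  constructor
  · -- submodular ⇒ mixed partials ≤ 0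
    intro hsub p i j hij
    rw [iteratedFDeriv_two_apply]
    simp only [Matrix.cons_val_zero, Matrix.cons_val_one, Matrix.head_cons]
    by_contra hpos
    push_neg at hpos
    set ei : Fin n → ℝ := Pi.single i 1 with hei
    set ej : Fin n → ℝ := Pi.single j 1 with hej
    set B : (Fin n → ℝ) → ℝ := fun q => fderiv ℝ (fderiv ℝ f) q ei ej with hB
    have hBp : 0 < B p := hpos
    have hBcont : Continuous B :=
      ((hf1.continuous_fderiv one_ne_zero).clm_apply continuous_const).clm_apply continuous_const
    have hev : ∀ᶠ q in nhds p, B p / 2 < B q :=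
      (hBcont.continuousAt).eventually_const_lt (by linarith)
    rw [Metric.eventually_nhds_iff_ball] at hev
    obtain ⟨δ, hδ, hball⟩ := hev
    set M : ℝ := ‖ei‖ + ‖ej‖ + 1 with hM
    have hM1 : (1:ℝ) ≤ M := by
      have := norm_nonneg ei; have := norm_nonneg ej; simp only [hM]; linarith
    have hMpos : (0:ℝ) < M := by linarith
    set ε : ℝ := δ / (2 * M) with hε
    have hεpos : 0 < ε := by positivity
    have hεM : ε * M = δ / 2 := by
      field_simp [hε]
      rw [hε, div_mul_eq_mul_div, div_mul_eq_mul_div, div_eq_iff (by positivity)]; ring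
    have hmem : ∀ σ ∈ Set.Icc (0:ℝ) 1, ∀ τ ∈ Set.Icc (0:ℝ) 1,
        p + σ • (ε • ei) + τ • (ε • ej) ∈ Metric.ball p δ := by
      intro σ hσ τ hτ
      have hd : dist (p + σ • (ε • ei) + τ • (ε • ej)) p = ‖σ • (ε • ei) + τ • (ε • ej)‖ := by
        rw [dist_eq_norm]
        congr 1
        abel
      rw [Metric.mem_ball, hd]
      have hb1 : ‖σ • (ε • ei) + τ • (ε • ej)‖ ≤ σ * (ε * ‖ei‖) + τ * (ε * ‖ej‖) := by
        calc ‖σ • (ε • ei) + τ • (ε • ej)‖ ≤ ‖σ • (ε • ei)‖ + ‖τ • (ε • ej)‖ := norm_add_le _ _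
          _ = σ * (ε * ‖ei‖) + τ * (ε * ‖ej‖) := by
              rw [norm_smul, norm_smul, norm_smul, norm_smul]
              simp [Real.norm_eq_abs, abs_of_nonneg hσ.1, abs_of_nonneg hτ.1,
                abs_of_nonneg hεpos.le]
      have h2 : σ * (ε * ‖ei‖) + τ * (ε * ‖ej‖) ≤ ε * (M - 1) := by
        have h3 : σ * (ε * ‖ei‖) ≤ ε * ‖ei‖ := by
          nlinarith [mul_nonneg (sub_nonneg.mpr hσ.2) (mul_nonneg hεpos.le (norm_nonneg ei))]
        have h4 : τ * (ε * ‖ej‖) ≤ ε * ‖ej‖ := by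
          nlinarith [mul_nonneg (sub_nonneg.mpr hτ.2) (mul_nonneg hεpos.le (norm_nonneg ej))]
        have : ε * ‖ei‖ + ε * ‖ej‖ = ε * (M - 1) := by rw [hM]; ring
        linarith
      have h5 : ε * (M - 1) < δ := by nlinarith
      linarith
    have hkey := key_ge f hf p (ε • ei) (ε • ej) (ε * (ε * (B p / 2))) ?_
    · have hs := hsub (p + ε • ei) (p + ε • ej)
      have hsup : (p + ε • ei) ⊔ (p + ε • ej) = p + ε • ei + ε • ej := by
        funext k
        simp only [Pi.sup_apply, Pi.add_apply, Pi.smul_apply, smul_eq_mul, hei, hej]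
        rcases eq_or_ne k i with rfl | hki
        · rw [Pi.single_eq_same, Pi.single_eq_of_ne hij]
          rw [max_eq_left (by linarith [hεpos.le])]
          ring
        · rcases eq_or_ne k j with rfl | hkj
          · rw [Pi.single_eq_same, Pi.single_eq_of_ne hki]
            rw [max_eq_right (by nlinarith [hεpos.le])]
            ring
          · rw [Pi.single_eq_of_ne hki, Pi.single_eq_of_ne hkj]
            simp
      have hinf : (p + ε • ei) ⊓ (p + ε • ej) = p := by
        funext k
        simp only [Pi.inf_apply, Pi.add_apply, Pi.smul_apply, smul_eq_mul, hei, hej]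
        rcases eq_or_ne k i with rfl | hki
        · rw [Pi.single_eq_same, Pi.single_eq_of_ne hij]
          rw [min_eq_right (by nlinarith [hεpos.le])]
          ring
        · rcases eq_or_ne k j with rfl | hkj
          · rw [Pi.single_eq_same, Pi.single_eq_of_ne hki]
            rw [min_eq_left (by nlinarith [hεpos.le])]
            ring
          · rw [Pi.single_eq_of_ne hki, Pi.single_eq_of_ne hkj]
            simp
      rw [hsup, hinf] at hs
      have hpos2 : 0 < ε * (ε * (B p / 2)) := by positivity
      linarith
    · intro σ hσ τ hτ
      have hq := hball _ (hmem σ hσ τ hτ)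
      have heq : fderiv ℝ (fderiv ℝ f) (p + σ • (ε • ei) + τ • (ε • ej)) (ε • ei) (ε • ej)
          = ε * (ε * B (p + σ • (ε • ei) + τ • (ε • ej))) := by
        simp only [map_smul, ContinuousLinearMap.smul_apply, smul_eq_mul, hB]
      rw [heq]
      nlinarith [mul_le_mul_of_nonneg_left hq.le (mul_nonneg hεpos.le hεpos.le)]
  · -- mixed partials ≤ 0 ⇒ submodular
    intro hmix x y
    have hmix' : ∀ q : Fin n → ℝ, ∀ i j : Fin n, i ≠ j →
        fderiv ℝ (fderiv ℝ f) q (Pi.single i 1) (Pi.single j 1) ≤ 0 := by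
      intro q i j hij
      have := hmix q i j hij
      rwa [iteratedFDeriv_two_apply, Matrix.cons_val_zero] at this
    have hkey := key_le f hf (x ⊓ y) (x - x ⊓ y) (y - x ⊓ y) 0 ?_
    · have e1 : x ⊓ y + (x - x ⊓ y) = x := by abel
      have e2 : x ⊓ y + (y - x ⊓ y) = y := by abel
      have e3 : x ⊓ y + (x - x ⊓ y) + (y - x ⊓ y) = x ⊔ y := by
        funext k
        simp only [Pi.add_apply, Pi.sub_apply, Pi.inf_apply, Pi.sup_apply]
        rcases le_total (x k) (y k) with h | h
        · rw [max_eq_right h, min_eq_left h]; ring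
        · rw [max_eq_left h, min_eq_right h]; ring
      rw [e3, e1, e2] at hkey
      linarith
    · intro σ _ τ _
      rw [expand_bilinear]
      apply Finset.sum_nonpos
      intro i _
      apply Finset.sum_nonpos
      intro j _
      rcases eq_or_ne i j with rfl | hij
      · have huv : (x - x ⊓ y) i * (y - x ⊓ y) i = 0 := by
          simp only [Pi.sub_apply, Pi.inf_apply]
          rcases le_total (x i) (y i) with h | h
          · rw [min_eq_left h]; ring
          · rw [min_eq_right h]; ring
        rw [huv, zero_mul]
      · have h1 : 0 ≤ (x - x ⊓ y) i := by
          simp only [Pi.sub_apply, Pi.inf_apply, sub_nonneg]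
          exact inf_le_left
        have h2 : 0 ≤ (y - x ⊓ y) j := by
          simp only [Pi.sub_apply, Pi.inf_apply, sub_nonneg]
          exact inf_le_right
        exact mul_nonpos_of_nonneg_of_nonpos (mul_nonneg h1 h2) (hmix' _ i j hij)
end

section
/- Suppose μ₁, μ₂ ∈ (0,1), σ₁, σ₂ > 0, σᵢ² ≤ μᵢ(1−μᵢ), and the intervals [σᵢ²/((1−μᵢ)²+σᵢ²), μᵢ²/(μᵢ²+σᵢ²)] for i=1,2 have a common point p. Then the two-point joint distribution taking (μ₁ − σ₁√(p/(1−p)), μ₂ − σ₂√(p/(1−p))) with probability 1−p and (μ₁ + σ₁√((1−p)/p), μ₂ + σ₂√((1−p)/p)) with probability p is supported in [0,1]² with marginal means μᵢ, marginal variances σᵢ², and E[ξ₁ξ₂] = μ₁μ₂ + σ₁σ₂. -/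
open MeasureTheory
set_option maxHeartbeats 1000000

lemma two_point_integral {x y : ℝ × ℝ} {a b : ℝ} (ha : 0 ≤ a) (hb : 0 ≤ b)
    (f : ℝ × ℝ → ℝ) :
    ∫ ξ, f ξ ∂((ENNReal.ofReal a) • Measure.dirac x + (ENNReal.ofReal b) • Measure.dirac y)
      = a * f x + b * f y := by
  have hx : Integrable f ((ENNReal.ofReal a) • Measure.dirac x) := by
    refine ((integrable_const (f x)).congr ?_).smul_measure ENNReal.ofReal_ne_top
    rw [MeasureTheory.ae_dirac_eq]; exact Filter.eventually_pure.2 rfl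
  have hy : Integrable f ((ENNReal.ofReal b) • Measure.dirac y) := by
    refine ((integrable_const (f y)).congr ?_).smul_measure ENNReal.ofReal_ne_top
    rw [MeasureTheory.ae_dirac_eq]; exact Filter.eventually_pure.2 rfl
  rw [integral_add_measure hx hy, integral_smul_measure, integral_smul_measure,
    integral_dirac, integral_dirac, ENNReal.toReal_ofReal ha, ENNReal.toReal_ofReal hb]
  simp [smul_eq_mul]

/-- The two-point joint distribution with perfect positive dependence is
supported in [0,1]², has marginal means μᵢ, marginal variances σᵢ², and
E[ξ₁ξ₂] = μ₁μ₂ + σ₁σ₂. -/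
theorem stmt14 (μ₁ μ₂ σ₁ σ₂ p : ℝ)
    (hμ₁ : μ₁ ∈ Set.Ioo (0 : ℝ) 1) (hμ₂ : μ₂ ∈ Set.Ioo (0 : ℝ) 1)
    (hσ₁0 : 0 < σ₁) (hσ₂0 : 0 < σ₂)
    (hσ₁ : σ₁ ^ 2 ≤ μ₁ * (1 - μ₁)) (hσ₂ : σ₂ ^ 2 ≤ μ₂ * (1 - μ₂))
    (hp₁ : p ∈ Set.Icc (σ₁ ^ 2 / ((1 - μ₁) ^ 2 + σ₁ ^ 2)) (μ₁ ^ 2 / (μ₁ ^ 2 + σ₁ ^ 2)))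
    (hp₂ : p ∈ Set.Icc (σ₂ ^ 2 / ((1 - μ₂) ^ 2 + σ₂ ^ 2)) (μ₂ ^ 2 / (μ₂ ^ 2 + σ₂ ^ 2))) :
    ∃ P : Measure (ℝ × ℝ),
      P = (ENNReal.ofReal (1 - p)) • Measure.dirac
            (μ₁ - σ₁ * Real.sqrt (p / (1 - p)), μ₂ - σ₂ * Real.sqrt (p / (1 - p))) +
          (ENNReal.ofReal p) • Measure.dirac
            (μ₁ + σ₁ * Real.sqrt ((1 - p) / p), μ₂ + σ₂ * Real.sqrt ((1 - p) / p)) ∧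
      IsProbabilityMeasure P ∧
      (∀ᵐ ξ ∂P, ξ.1 ∈ Set.Icc (0 : ℝ) 1 ∧ ξ.2 ∈ Set.Icc (0 : ℝ) 1) ∧
      (∫ ξ, ξ.1 ∂P = μ₁) ∧ (∫ ξ, ξ.2 ∂P = μ₂) ∧
      (∫ ξ, (ξ.1 - μ₁) ^ 2 ∂P = σ₁ ^ 2) ∧ (∫ ξ, (ξ.2 - μ₂) ^ 2 ∂P = σ₂ ^ 2) ∧
      (∫ ξ, ξ.1 * ξ.2 ∂P = μ₁ * μ₂ + σ₁ * σ₂) := by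
  obtain ⟨hμ₁0, hμ₁1⟩ := hμ₁
  obtain ⟨hμ₂0, hμ₂1⟩ := hμ₂
  obtain ⟨hp₁l, hp₁u⟩ := hp₁
  obtain ⟨hp₂l, hp₂u⟩ := hp₂
  have hd1 : 0 < (1 - μ₁) ^ 2 + σ₁ ^ 2 := by positivity
  have hd2 : 0 < μ₁ ^ 2 + σ₁ ^ 2 := by positivity
  have hp0 : 0 < p := lt_of_lt_of_le (by positivity) hp₁l
  have hp1 : p < 1 := lt_of_le_of_lt hp₁u (by
    rw [div_lt_one hd2]; nlinarith)
  have hq0 : 0 < 1 - p := by linarith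
  set s := Real.sqrt (p / (1 - p)) with hs_def
  set t := Real.sqrt ((1 - p) / p) with ht_def
  have hs0 : 0 ≤ s := Real.sqrt_nonneg _
  have ht0 : 0 ≤ t := Real.sqrt_nonneg _
  have hs2 : s ^ 2 = p / (1 - p) := Real.sq_sqrt (by positivity)
  have ht2 : t ^ 2 = (1 - p) / p := Real.sq_sqrt (by positivity)
  have hst : s * t = 1 := by
    rw [hs_def, ht_def, ← Real.sqrt_mul (by positivity)]
    rw [show p / (1 - p) * ((1 - p) / p) = 1 by field_simp]
    exact Real.sqrt_one
  have key : p * t = (1 - p) * s := by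
    have h1 : p * t = p * t * (s * t) := by rw [hst]; ring
    calc p * t = p * s * t ^ 2 := by rw [h1]; ring
      _ = p * s * ((1 - p) / p) := by rw [ht2]
      _ = (1 - p) * s := by field_simp
  -- bounds: σᵢ s ≤ μᵢ and σᵢ t ≤ 1 - μᵢ
  have hb1 : ∀ μ σ : ℝ, 0 < μ → 0 < σ → p ≤ μ ^ 2 / (μ ^ 2 + σ ^ 2) → σ * s ≤ μ := by
    intro μ σ hμ hσ hu
    have h2 : p * (μ ^ 2 + σ ^ 2) ≤ μ ^ 2 := (le_div_iff₀ (by positivity)).mp hu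
    have hss : (σ * s) ^ 2 ≤ μ ^ 2 := by
      calc (σ * s) ^ 2 = σ ^ 2 * s ^ 2 := by ring
        _ = σ ^ 2 * p / (1 - p) := by rw [hs2]; ring
        _ ≤ μ ^ 2 := (div_le_iff₀ hq0).mpr (by nlinarith)
    nlinarith [mul_nonneg hσ.le hs0]
  have hb2 : ∀ μ σ : ℝ, 0 < σ → μ < 1 → σ ^ 2 / ((1 - μ) ^ 2 + σ ^ 2) ≤ p → σ * t ≤ 1 - μ := by
    intro μ σ hσ hμ hl
    have hd : 0 < (1 - μ) ^ 2 + σ ^ 2 := by positivity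
    have h2 : σ ^ 2 ≤ p * ((1 - μ) ^ 2 + σ ^ 2) := by
      rw [div_le_iff₀ hd] at hl; linarith
    have hss : (σ * t) ^ 2 ≤ (1 - μ) ^ 2 := by
      calc (σ * t) ^ 2 = σ ^ 2 * t ^ 2 := by ring
        _ = σ ^ 2 * (1 - p) / p := by rw [ht2]; ring
        _ ≤ (1 - μ) ^ 2 := (div_le_iff₀ hp0).mpr (by nlinarith)
    nlinarith [mul_nonneg hσ.le ht0]
  have h1s : σ₁ * s ≤ μ₁ := hb1 μ₁ σ₁ hμ₁0 hσ₁0 hp₁u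
  have h2s : σ₂ * s ≤ μ₂ := hb1 μ₂ σ₂ hμ₂0 hσ₂0 hp₂u
  have h1t : σ₁ * t ≤ 1 - μ₁ := hb2 μ₁ σ₁ hσ₁0 hμ₁1 hp₁l
  have h2t : σ₂ * t ≤ 1 - μ₂ := hb2 μ₂ σ₂ hσ₂0 hμ₂1 hp₂l
  have hs1pos : 0 ≤ σ₁ * s := mul_nonneg hσ₁0.le hs0
  have hs2pos : 0 ≤ σ₂ * s := mul_nonneg hσ₂0.le hs0
  have ht1pos : 0 ≤ σ₁ * t := mul_nonneg hσ₁0.le ht0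
  have ht2pos : 0 ≤ σ₂ * t := mul_nonneg hσ₂0.le ht0
  refine ⟨(ENNReal.ofReal (1 - p)) • Measure.dirac (μ₁ - σ₁ * s, μ₂ - σ₂ * s)
      + (ENNReal.ofReal p) • Measure.dirac (μ₁ + σ₁ * t, μ₂ + σ₂ * t),
    rfl, ?_, ?_, ?_, ?_, ?_, ?_, ?_⟩
  · constructor
    rw [Measure.coe_add, Pi.add_apply, Measure.smul_apply, Measure.smul_apply,
      Measure.dirac_apply_of_mem (Set.mem_univ _), Measure.dirac_apply_of_mem (Set.mem_univ _),
      smul_eq_mul, smul_eq_mul, mul_one, mul_one, ← ENNReal.ofReal_add hq0.le hp0.le]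
    norm_num
  · rw [ae_add_measure_iff]
    constructor
    · refine Measure.ae_smul_measure ?_ _
      rw [MeasureTheory.ae_dirac_eq]
      refine Filter.eventually_pure.2 ⟨⟨?_, ?_⟩, ?_, ?_⟩
      · show 0 ≤ μ₁ - σ₁ * s; linarith
      · show μ₁ - σ₁ * s ≤ 1; linarith
      · show 0 ≤ μ₂ - σ₂ * s; linarith
      · show μ₂ - σ₂ * s ≤ 1; linarith
    · refine Measure.ae_smul_measure ?_ _
      rw [MeasureTheory.ae_dirac_eq]
      refine Filter.eventually_pure.2 ⟨⟨?_, ?_⟩, ?_, ?_⟩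
      · show 0 ≤ μ₁ + σ₁ * t; linarith
      · show μ₁ + σ₁ * t ≤ 1; linarith
      · show 0 ≤ μ₂ + σ₂ * t; linarith
      · show μ₂ + σ₂ * t ≤ 1; linarith
  · rw [two_point_integral hq0.le hp0.le (fun ξ => ξ.1)]
    show (1 - p) * (μ₁ - σ₁ * s) + p * (μ₁ + σ₁ * t) = μ₁
    linear_combination σ₁ * key
  · rw [two_point_integral hq0.le hp0.le (fun ξ => ξ.2)]
    show (1 - p) * (μ₂ - σ₂ * s) + p * (μ₂ + σ₂ * t) = μ₂
    linear_combination σ₂ * key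
  · rw [two_point_integral hq0.le hp0.le (fun ξ => (ξ.1 - μ₁) ^ 2)]
    show (1 - p) * (μ₁ - σ₁ * s - μ₁) ^ 2 + p * (μ₁ + σ₁ * t - μ₁) ^ 2 = σ₁ ^ 2
    have e1 : (μ₁ - σ₁ * s - μ₁) ^ 2 = σ₁ ^ 2 * (p / (1 - p)) := by rw [← hs2]; ring
    have e2 : (μ₁ + σ₁ * t - μ₁) ^ 2 = σ₁ ^ 2 * ((1 - p) / p) := by rw [← ht2]; ring
    rw [e1, e2]; field_simp; ring
  · rw [two_point_integral hq0.le hp0.le (fun ξ => (ξ.2 - μ₂) ^ 2)]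
    show (1 - p) * (μ₂ - σ₂ * s - μ₂) ^ 2 + p * (μ₂ + σ₂ * t - μ₂) ^ 2 = σ₂ ^ 2
    have e1 : (μ₂ - σ₂ * s - μ₂) ^ 2 = σ₂ ^ 2 * (p / (1 - p)) := by rw [← hs2]; ring
    have e2 : (μ₂ + σ₂ * t - μ₂) ^ 2 = σ₂ ^ 2 * ((1 - p) / p) := by rw [← ht2]; ring
    rw [e1, e2]; field_simp; ring
  · rw [two_point_integral hq0.le hp0.le (fun ξ => ξ.1 * ξ.2)]
    show (1 - p) * ((μ₁ - σ₁ * s) * (μ₂ - σ₂ * s)) + p * ((μ₁ + σ₁ * t) * (μ₂ + σ₂ * t))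
      = μ₁ * μ₂ + σ₁ * σ₂
    have e1 : (1 - p) * s ^ 2 + p * t ^ 2 = 1 := by
      rw [hs2, ht2]; field_simp; ring
    linear_combination σ₁ * σ₂ * e1 + (σ₁ * μ₂ + σ₂ * μ₁) * key
end
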